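/- Suppose a word w = w(x_1, ..., x_n) has only countably many values in a profinite group G. Then the word v(x_1, ..., x_{2n}) = w(x_1, ..., x_n) · w(x_{n+1}, ..., x_{2n})^{-1} is a coset identity in G: there exist an open subgroup H ≤ G and elements a_1, ..., a_n ∈ G such that w(g_1, ..., g_n) = w(g_1', ..., g_n') for all g_i, g_i' ∈ a_iH. -/

import Mathlib

open scoped Pointwise

private lemma continuous_word_map {G : Type*} [Group G] [TopologicalSpace G]
    [IsTopologicalGroup G] {n : ℕ} (wrd : FreeGroup (Fin n)) :
    Continuous fun g : Fin n → G => FreeGroup.lift g wrd := by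
  induction wrd using FreeGroup.induction_on with
  | C1 => simpa using continuous_const
  | of i =>
      have : (fun g : Fin n → G => FreeGroup.lift g (FreeGroup.of i : FreeGroup (Fin n))) = fun g => g i := by
        funext g; exact FreeGroup.lift_apply_of
      rw [this]; exact continuous_apply i
  | inv_of i h => simp only [map_inv]; exact h.inv
  | mul x y hx hy => simp only [map_mul]; exact hx.mul hy

/-- If a word `w` in `n` variables has only countably many values in a
profinite group `G`, then `w(x₁,…,xₙ)w(x_{n+1},…,x_{2n})⁻¹` is a coset
identity: there are an open subgroup `H` and elements `a₁,…,aₙ` such that `w`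
is constant on the cosets `a₁H × ⋯ × aₙH`. -/
theorem coset_identity_of_countably_many_word_values {G : Type*} [Group G]
    [TopologicalSpace G] [IsTopologicalGroup G] [CompactSpace G] [T2Space G]
    [TotallyDisconnectedSpace G] {n : ℕ} (wrd : FreeGroup (Fin n))
    (hcount : (Set.range fun g : Fin n → G => FreeGroup.lift g wrd).Countable) :
    ∃ H : Subgroup G, IsOpen (H : Set G) ∧ ∃ a : Fin n → G,
      ∀ g g' : Fin n → G, (∀ i, g i ∈ a i • (H : Set G)) →
        (∀ i, g' i ∈ a i • (H : Set G)) →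
        FreeGroup.lift g wrd = FreeGroup.lift g' wrd := by
  set f : (Fin n → G) → G := fun g => FreeGroup.lift g wrd with hf
  have hfc : Continuous f := continuous_word_map wrd
  haveI : Countable ↥(Set.range f) := hcount.to_subtype
  -- Baire category: some fiber has nonempty interior
  have hcover : ⋃ u : ↥(Set.range f), f ⁻¹' {(u : G)} = Set.univ := by
    ext x
    simp only [Set.mem_iUnion, Set.mem_preimage, Set.mem_singleton_iff, Set.mem_univ, iff_true]
    exact ⟨⟨f x, Set.mem_range_self x⟩, rfl⟩
  obtain ⟨u, a, ha⟩ := nonempty_interior_of_iUnion_of_closed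
    (fun u : ↥(Set.range f) => (isClosed_singleton.preimage hfc)) hcover
  -- extract a basic open box around `a` inside the interior
  obtain ⟨I, u', hu', hsub⟩ := isOpen_pi_iff.mp isOpen_interior a ha
  set U : Fin n → Set G := fun i => if i ∈ I then u' i else Set.univ with hU
  have hUopen : ∀ i, IsOpen (U i) := by
    intro i; rw [hU]; dsimp only
    split
    · exact (hu' i ‹_›).1
    · exact isOpen_univ
  have haU : ∀ i, a i ∈ U i := by
    intro i; rw [hU]; dsimp only
    split
    · exact (hu' i ‹_›).2
    · trivial
  have hboxsub : Set.univ.pi U ⊆ interior (f ⁻¹' {(u : G)}) := by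
    refine Set.Subset.trans ?_ hsub
    intro x hx i hi
    simp only [Finset.mem_coe] at hi
    simpa [hU, hi] using hx i trivial
  -- an open subgroup inside the neighborhood of 1
  set V : Set G := ⋂ i, (a i)⁻¹ • U i with hV
  have hVopen : IsOpen V := isOpen_iInter_of_finite fun i => (hUopen i).smul _
  have h1V : (1 : G) ∈ V := Set.mem_iInter.2 fun i => by
    refine ⟨a i, haU i, ?_⟩; simp
  obtain ⟨W, hWclopen, h1W, hWV⟩ := compact_exists_isClopen_in_isOpen hVopen h1V
  obtain ⟨H, hHW⟩ :=
    IsTopologicalGroup.exist_openSubgroup_sub_clopen_nhds_of_one hWclopen h1W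
  refine ⟨H.toSubgroup, H.isOpen, a, ?_⟩
  have key : ∀ g : Fin n → G, (∀ i, g i ∈ a i • (H.toSubgroup : Set G)) → f g = u := by
    intro g hg
    have : g ∈ Set.univ.pi U := by
      intro i _
      have h1 : g i ∈ a i • V := by
        obtain ⟨h, hh, hgh⟩ := hg i
        exact ⟨h, hWV (hHW hh), hgh⟩
      have h2 : a i • V ⊆ a i • ((a i)⁻¹ • U i) :=
        Set.smul_set_mono (Set.iInter_subset _ i)
      have h3 := h2 h1
      rwa [smul_smul, mul_inv_cancel, one_smul] at h3
    have := interior_subset (hboxsub this)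
    simpa using this
  intro g g' hg hg'
  have := (key g hg).trans (key g' hg').symm
  simpa [hf] using this
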